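/- Let n₁, n₂ ≥ 3 be odd and coprime, and let n = n₁·n₂. Then there exist a unitary map V : ℂ^{ℤ/nℤ} → ℂ^{ℤ/n₁ℤ} ⊗ ℂ^{ℤ/n₂ℤ} and a group isomorphism φ = (φ₁, φ₂) : (ℤ/nℤ)² → (ℤ/n₁ℤ)² × (ℤ/n₂ℤ)² such that V·D^{(n)}_p·V† = D^{(n₁)}_{φ₁(p)} ⊗ D^{(n₂)}_{φ₂(p)} for all p ∈ (ℤ/nℤ)²; that is, the Weyl–Heisenberg displacement operators in dimension n₁n₂ split canonically as tensor products of displacement operators in dimensions n₁ and n₂. -/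

import Mathlib

open Matrix Complex Kronecker

/-- `τ_n = -exp(iπ/n)`. -/
noncomputable def tau (n : ℕ) : ℂ := -Complex.exp (Real.pi * Complex.I / n)

/-- The displacement operator `D^{(n)}_p = D_{i,j}`, with `(r,s)` entry
`τ_n^{ij+2js} δ_{r,s+i}` (exponents of the `n`-th root of unity `τ_n` mod `n`). -/
noncomputable def Disp (n : ℕ) [NeZero n] (p : ZMod n × ZMod n) :
    Matrix (ZMod n) (ZMod n) ℂ :=
  Matrix.of fun r s =>
    tau n ^ ((p.1 * p.2 + 2 * p.2 * s).val) * (if r = s + p.1 then 1 else 0)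

lemma tau_pow_self {n : ℕ} (hn : Odd n) : tau n ^ n = 1 := by
  have hne : (n : ℂ) ≠ 0 := by
    have : n ≠ 0 := by rintro rfl; simp [Nat.odd_iff] at hn
    exact_mod_cast this
  unfold tau
  rw [neg_pow, hn.neg_one_pow, ← Complex.exp_nat_mul]
  have : (n : ℂ) * (Real.pi * Complex.I / n) = Real.pi * Complex.I := by field_simp
  rw [this, Complex.exp_pi_mul_I]
  ring

lemma tau_pow_congr {n : ℕ} (hn : Odd n) {a b : ℕ} (h : a ≡ b [MOD n]) :
    tau n ^ a = tau n ^ b := by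
  have key : ∀ c : ℕ, tau n ^ c = tau n ^ (c % n) := by
    intro c
    conv_lhs => rw [← Nat.div_add_mod c n]
    rw [pow_add, pow_mul, tau_pow_self hn, one_pow, one_mul]
  rw [key a, key b, h]

lemma tau_mul_pow {n₁ n₂ : ℕ} (h₁ : n₁ ≠ 0) (h₂ : Odd n₂) : tau (n₁ * n₂) ^ n₂ = tau n₁ := by
  have h₂0 : n₂ ≠ 0 := by rintro rfl; simp [Nat.odd_iff] at h₂
  unfold tau
  rw [neg_pow, h₂.neg_one_pow, ← Complex.exp_nat_mul]
  have : (n₂ : ℂ) * (Real.pi * Complex.I / (↑(n₁ * n₂))) = Real.pi * Complex.I / n₁ := by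
    have c1 : (n₁ : ℂ) ≠ 0 := by exact_mod_cast h₁
    have c2 : (n₂ : ℂ) ≠ 0 := by exact_mod_cast h₂0
    push_cast
    field_simp
  rw [this]
  ring

section Aux

variable (n₁ n₂ : ℕ) [NeZero n₁] [NeZero n₂]

/-- Reduction mod `n₁`. -/
noncomputable abbrev pr1 : ZMod (n₁ * n₂) →+* ZMod n₁ :=
  ZMod.castHom (dvd_mul_right n₁ n₂) (ZMod n₁)

/-- Reduction mod `n₂`. -/
noncomputable abbrev pr2 : ZMod (n₁ * n₂) →+* ZMod n₂ :=
  ZMod.castHom (dvd_mul_left n₂ n₁) (ZMod n₂)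

/-- The CRT splitting of phase space, with the momentum coordinate twisted by
`n₂⁻¹` resp. `n₁⁻¹`. -/
noncomputable def crtHom :
    (ZMod (n₁ * n₂) × ZMod (n₁ * n₂)) →+ ((ZMod n₁ × ZMod n₁) × (ZMod n₂ × ZMod n₂)) where
  toFun p := ((pr1 n₁ n₂ p.1, (n₂ : ZMod n₁)⁻¹ * pr1 n₁ n₂ p.2),
              (pr2 n₁ n₂ p.1, (n₁ : ZMod n₂)⁻¹ * pr2 n₁ n₂ p.2))
  map_zero' := by simp
  map_add' p q := by
    simp [Prod.ext_iff, map_add, mul_add]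

lemma crtHom_apply (p : ZMod (n₁ * n₂) × ZMod (n₁ * n₂)) :
    crtHom n₁ n₂ p = ((pr1 n₁ n₂ p.1, (n₂ : ZMod n₁)⁻¹ * pr1 n₁ n₂ p.2),
      (pr2 n₁ n₂ p.1, (n₁ : ZMod n₂)⁻¹ * pr2 n₁ n₂ p.2)) := rfl

variable {n₁ n₂}

lemma pr_pair_inj (hcop : Nat.Coprime n₁ n₂) {x y : ZMod (n₁ * n₂)}
    (h1 : pr1 n₁ n₂ x = pr1 n₁ n₂ y) (h2 : pr2 n₁ n₂ x = pr2 n₁ n₂ y) : x = y := by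
  haveI : NeZero (n₁ * n₂) := ⟨mul_ne_zero (NeZero.ne n₁) (NeZero.ne n₂)⟩
  have e1 : (x.val : ZMod n₁) = (y.val : ZMod n₁) := by
    rwa [ZMod.natCast_val, ZMod.natCast_val, ← ZMod.castHom_apply (h := dvd_mul_right n₁ n₂),
      ← ZMod.castHom_apply (h := dvd_mul_right n₁ n₂)]
  have e2 : (x.val : ZMod n₂) = (y.val : ZMod n₂) := by
    rwa [ZMod.natCast_val, ZMod.natCast_val, ← ZMod.castHom_apply (h := dvd_mul_left n₂ n₁),
      ← ZMod.castHom_apply (h := dvd_mul_left n₂ n₁)]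
  have m1 := (ZMod.natCast_eq_natCast_iff _ _ _).1 e1
  have m2 := (ZMod.natCast_eq_natCast_iff _ _ _).1 e2
  have h := (ZMod.natCast_eq_natCast_iff _ _ _).2
    ((Nat.modEq_and_modEq_iff_modEq_mul hcop).1 ⟨m1, m2⟩)
  rwa [ZMod.natCast_zmod_val, ZMod.natCast_zmod_val] at h

/-- The key pointwise identity for displacement-operator entries. -/
lemma disp_entry [NeZero (n₁ * n₂)] (h₁ : Odd n₁) (h₂ : Odd n₂)
    (hcop : Nat.Coprime n₁ n₂) (p : ZMod (n₁ * n₂) × ZMod (n₁ * n₂))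
    (r s : ZMod (n₁ * n₂)) :
    Disp (n₁ * n₂) p r s =
      Disp n₁ (crtHom n₁ n₂ p).1 (pr1 n₁ n₂ r) (pr1 n₁ n₂ s) *
      Disp n₂ (crtHom n₁ n₂ p).2 (pr2 n₁ n₂ r) (pr2 n₁ n₂ s) := by
  obtain ⟨i, j⟩ := p
  have hb₁ : (n₂ : ZMod n₁) * (n₂ : ZMod n₁)⁻¹ = 1 :=
    ZMod.coe_mul_inv_eq_one n₂ hcop.symm
  have hb₂ : (n₁ : ZMod n₂) * (n₁ : ZMod n₂)⁻¹ = 1 :=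
    ZMod.coe_mul_inv_eq_one n₁ hcop
  have hNodd : Odd (n₁ * n₂) := Nat.odd_mul.mpr ⟨h₁, h₂⟩
  dsimp only [Disp, Matrix.of_apply, crtHom_apply]
  have hiff : r = s + i ↔
      (pr1 n₁ n₂ r = pr1 n₁ n₂ s + pr1 n₁ n₂ i ∧
       pr2 n₁ n₂ r = pr2 n₁ n₂ s + pr2 n₁ n₂ i) := by
    constructor
    · rintro rfl; simp [map_add]
    · rintro ⟨u, v⟩
      exact pr_pair_inj hcop (by simpa [map_add] using u) (by simpa [map_add] using v)
  by_cases hc : r = s + i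
  · obtain ⟨hc1, hc2⟩ := hiff.1 hc
    rw [if_pos hc, if_pos hc1, if_pos hc2, mul_one, mul_one, mul_one]
    -- phase identity
    have key : (i * j + 2 * j * s).val ≡
        n₂ * ((pr1 n₁ n₂ i * ((n₂ : ZMod n₁)⁻¹ * pr1 n₁ n₂ j) +
              2 * ((n₂ : ZMod n₁)⁻¹ * pr1 n₁ n₂ j) * pr1 n₁ n₂ s).val) +
        n₁ * ((pr2 n₁ n₂ i * ((n₁ : ZMod n₂)⁻¹ * pr2 n₁ n₂ j) +
              2 * ((n₁ : ZMod n₂)⁻¹ * pr2 n₁ n₂ j) * pr2 n₁ n₂ s).val)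
        [MOD n₁ * n₂] := by
      rw [← ZMod.natCast_eq_natCast_iff]
      apply pr_pair_inj hcop
      · rw [map_natCast, map_natCast]
        rw [ZMod.natCast_val, ← ZMod.castHom_apply (h := dvd_mul_right n₁ n₂)]
        push_cast
        rw [ZMod.natCast_self, zero_mul, ZMod.natCast_zmod_val]
        rw [map_add (ZMod.castHom (dvd_mul_right n₁ n₂) (ZMod n₁)), map_mul (ZMod.castHom (dvd_mul_right n₁ n₂) (ZMod n₁)), map_mul (ZMod.castHom (dvd_mul_right n₁ n₂) (ZMod n₁)), map_mul (ZMod.castHom (dvd_mul_right n₁ n₂) (ZMod n₁)), map_ofNat (ZMod.castHom (dvd_mul_right n₁ n₂) (ZMod n₁))]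
        linear_combination -(pr1 n₁ n₂ i * pr1 n₁ n₂ j + 2 * pr1 n₁ n₂ j * pr1 n₁ n₂ s) * hb₁
      · rw [map_natCast, map_natCast]
        rw [ZMod.natCast_val, ← ZMod.castHom_apply (h := dvd_mul_left n₂ n₁)]
        push_cast
        rw [ZMod.natCast_self, zero_mul, ZMod.natCast_zmod_val]
        rw [map_add (ZMod.castHom (dvd_mul_left n₂ n₁) (ZMod n₂)), map_mul (ZMod.castHom (dvd_mul_left n₂ n₁) (ZMod n₂)), map_mul (ZMod.castHom (dvd_mul_left n₂ n₁) (ZMod n₂)), map_mul (ZMod.castHom (dvd_mul_left n₂ n₁) (ZMod n₂)), map_ofNat (ZMod.castHom (dvd_mul_left n₂ n₁) (ZMod n₂))]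
        linear_combination -(pr2 n₁ n₂ i * pr2 n₁ n₂ j + 2 * pr2 n₁ n₂ j * pr2 n₁ n₂ s) * hb₂
    rw [tau_pow_congr hNodd key, pow_add, pow_mul, pow_mul,
      tau_mul_pow (NeZero.ne n₁) h₂]
    congr 2
    have h' : tau (n₁ * n₂) = tau (n₂ * n₁) := by rw [Nat.mul_comm]
    rw [h', tau_mul_pow (NeZero.ne n₂) h₁]
  · have hnot : ¬(pr1 n₁ n₂ r = pr1 n₁ n₂ s + pr1 n₁ n₂ i ∧
        pr2 n₁ n₂ r = pr2 n₁ n₂ s + pr2 n₁ n₂ i) := fun h => hc (hiff.2 h)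
    rw [if_neg hc, mul_zero]
    rcases not_and_or.1 hnot with h | h
    · rw [if_neg h]; ring
    · rw [if_neg h]; ring

end Aux

/-- Chinese remaindering of the Weyl–Heisenberg group: for odd coprime
`n₁, n₂`, there are a unitary `V : ℂ^{ℤ/n₁n₂ℤ} → ℂ^{ℤ/n₁ℤ} ⊗ ℂ^{ℤ/n₂ℤ}` and a
group isomorphism `φ : (ℤ/n₁n₂ℤ)² ≃ (ℤ/n₁ℤ)² × (ℤ/n₂ℤ)²` such that
`V D^{(n₁n₂)}_p V† = D^{(n₁)}_{φ₁(p)} ⊗ D^{(n₂)}_{φ₂(p)}` for all `p`. -/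
theorem weyl_heisenberg_crt_splitting
    (n₁ n₂ : ℕ) [NeZero n₁] [NeZero n₂]
    (h₁ : Odd n₁) (h₂ : Odd n₂) (h₁3 : 3 ≤ n₁) (h₂3 : 3 ≤ n₂)
    (hcop : Nat.Coprime n₁ n₂) :
    ∃ (V : Matrix (ZMod n₁ × ZMod n₂) (ZMod (n₁ * n₂)) ℂ)
      (φ : (ZMod (n₁ * n₂) × ZMod (n₁ * n₂)) ≃+
        ((ZMod n₁ × ZMod n₁) × (ZMod n₂ × ZMod n₂))),
      Vᴴ * V = 1 ∧ V * Vᴴ = 1 ∧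
      ∀ p : ZMod (n₁ * n₂) × ZMod (n₁ * n₂),
        V * Disp (n₁ * n₂) p * Vᴴ = Disp n₁ (φ p).1 ⊗ₖ Disp n₂ (φ p).2 := by
  haveI : NeZero (n₁ * n₂) := ⟨mul_ne_zero (NeZero.ne n₁) (NeZero.ne n₂)⟩
  have hb₁ : (n₂ : ZMod n₁) * (n₂ : ZMod n₁)⁻¹ = 1 :=
    ZMod.coe_mul_inv_eq_one n₂ hcop.symm
  have hb₂ : (n₁ : ZMod n₂) * (n₁ : ZMod n₂)⁻¹ = 1 :=
    ZMod.coe_mul_inv_eq_one n₁ hcop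
  -- the CRT bijection on index types
  have hfbij : Function.Bijective
      (fun x : ZMod (n₁ * n₂) => ((pr1 n₁ n₂ x, pr2 n₁ n₂ x) : ZMod n₁ × ZMod n₂)) := by
    rw [Fintype.bijective_iff_injective_and_card]
    constructor
    · intro x y h
      rw [Prod.mk.injEq] at h
      exact pr_pair_inj hcop h.1 h.2
    · simp [ZMod.card]
  let E₀ : ZMod (n₁ * n₂) ≃ ZMod n₁ × ZMod n₂ := Equiv.ofBijective _ hfbij
  let E : ZMod n₁ × ZMod n₂ ≃ ZMod (n₁ * n₂) := E₀.symm
  have hE1 : ∀ ab : ZMod n₁ × ZMod n₂, pr1 n₁ n₂ (E ab) = ab.1 := fun ab =>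
    congrArg Prod.fst (E₀.apply_symm_apply ab)
  have hE2 : ∀ ab : ZMod n₁ × ZMod n₂, pr2 n₁ n₂ (E ab) = ab.2 := fun ab =>
    congrArg Prod.snd (E₀.apply_symm_apply ab)
  -- the phase-space isomorphism
  have hφbij : Function.Bijective (crtHom n₁ n₂) := by
    rw [Fintype.bijective_iff_injective_and_card]
    constructor
    · intro p q h
      simp only [crtHom_apply, Prod.mk.injEq] at h
      obtain ⟨⟨h11, h12⟩, h21, h22⟩ := h
      have h12' : pr1 n₁ n₂ p.2 = pr1 n₁ n₂ q.2 := by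
        have := congrArg (fun z => (n₂ : ZMod n₁) * z) h12
        simpa [← mul_assoc, hb₁] using this
      have h22' : pr2 n₁ n₂ p.2 = pr2 n₁ n₂ q.2 := by
        have := congrArg (fun z => (n₁ : ZMod n₂) * z) h22
        simpa [← mul_assoc, hb₂] using this
      exact Prod.ext (pr_pair_inj hcop h11 h21) (pr_pair_inj hcop h12' h22')
    · simp [ZMod.card]
      ring
  let φ : (ZMod (n₁ * n₂) × ZMod (n₁ * n₂)) ≃+
      ((ZMod n₁ × ZMod n₁) × (ZMod n₂ × ZMod n₂)) :=
    AddEquiv.ofBijective (crtHom n₁ n₂) hφbij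
  have hφ : ∀ p, φ p = crtHom n₁ n₂ p := fun _ => rfl
  -- the unitary
  set One : Matrix (ZMod (n₁ * n₂)) (ZMod (n₁ * n₂)) ℂ := 1 with hOne
  have h1 : Oneᴴ = One := by rw [hOne]; exact conjTranspose_one
  have hct : (One.submatrix E id)ᴴ = One.submatrix id E := by
    rw [conjTranspose_submatrix, h1]
  refine ⟨One.submatrix E id, φ, ?_, ?_, ?_⟩
  · rw [hct, submatrix_mul_equiv One One id E (id : ZMod (n₁ * n₂) → ZMod (n₁ * n₂)),
      submatrix_id_id, hOne, one_mul]
  · rw [hct]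
    have h2 : One.submatrix E id * One.submatrix id E
        = One.submatrix (⇑E) (⇑(Equiv.refl (ZMod (n₁ * n₂)))) *
          One.submatrix (⇑(Equiv.refl (ZMod (n₁ * n₂)))) (⇑E) := by rfl
    rw [h2, submatrix_mul_equiv One One (⇑E) (Equiv.refl _) (⇑E), hOne, one_mul,
      submatrix_one_equiv]
  · intro p
    have hconj : One.submatrix E id * Disp (n₁ * n₂) p * (One.submatrix E id)ᴴ
        = (Disp (n₁ * n₂) p).submatrix E E := by
      rw [hct]
      have e1 : One.submatrix E id * Disp (n₁ * n₂) p
          = One.submatrix (⇑E) (⇑(Equiv.refl (ZMod (n₁ * n₂)))) *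
            (Disp (n₁ * n₂) p).submatrix (⇑(Equiv.refl (ZMod (n₁ * n₂)))) id := by
        conv_lhs => rw [← Matrix.submatrix_id_id (Disp (n₁ * n₂) p)]
        rfl
      rw [e1, submatrix_mul_equiv One (Disp (n₁ * n₂) p) (⇑E) (Equiv.refl _) id,
        hOne, one_mul]
      have e2 : (Disp (n₁ * n₂) p).submatrix E id * One.submatrix id E
          = (Disp (n₁ * n₂) p).submatrix (⇑E) (⇑(Equiv.refl (ZMod (n₁ * n₂)))) *
            One.submatrix (⇑(Equiv.refl (ZMod (n₁ * n₂)))) (⇑E) := by rfl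
      rw [e2, submatrix_mul_equiv (Disp (n₁ * n₂) p) One (⇑E) (Equiv.refl _) (⇑E),
        hOne, mul_one]
    rw [hconj]
    ext ab cd
    rw [Matrix.submatrix_apply, Matrix.kroneckerMap_apply,
      disp_entry h₁ h₂ hcop p (E ab) (E cd), hE1, hE1, hE2, hE2, hφ]
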